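/- The triplet (z*, λ*, μ*) satisfies the Karush–Kuhn–Tucker conditions: Dz* − v + λ*c − μ*eₙ = 0, c^⊤z* = 0, z*ₙ ≥ 0, μ* ≥ 0, and μ*·z*ₙ = 0. Moreover (λ*,μ*) is a Lagrange multiplier for the primal problem: μ* ≥ 0 and inf_{z∈ℝⁿ} [ f(z) + λ*·c^⊤z − μ*·zₙ ] = −½·v^⊤z*, which is the optimal value of the primal problem. -/

import Mathlib

open Finset

noncomputable section

namespace Stmt6

/-- The last index of `Fin (n+2)`. -/
def lastIdx (n : ℕ) : Fin (n + 2) := Fin.last (n + 1)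

variable {n : ℕ}

/-- The `n`-th standard basis vector `eₙ`. -/
def eVec (n : ℕ) : Fin (n + 2) → ℝ := fun i => if i = lastIdx n then 1 else 0

/-- `c^⊤ D⁻¹ v` for the diagonal matrix `D = diag d`. -/
def cDv (d v c : Fin (n + 2) → ℝ) : ℝ := ∑ i, c i * v i / d i

/-- `c^⊤ D⁻¹ c` for the diagonal matrix `D = diag d`. -/
def cDc (d c : Fin (n + 2) → ℝ) : ℝ := ∑ i, c i * c i / d i

/-- The indicator `1_A`. -/
def indA (d v c : Fin (n + 2) → ℝ) : ℝ :=
  if v (lastIdx n) - cDv d v c / cDc d c * c (lastIdx n) < 0 then 1 else 0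

/-- `λ*`. -/
def lamStar (d v c : Fin (n + 2) → ℝ) : ℝ :=
  (cDv d v c - c (lastIdx n) * v (lastIdx n) / d (lastIdx n) * indA d v c) /
    (cDc d c - c (lastIdx n) ^ 2 / d (lastIdx n) * indA d v c)

/-- `μ* = max (-(vₙ - λ* cₙ)) 0`. -/
def muStar (d v c : Fin (n + 2) → ℝ) : ℝ :=
  max (-(v (lastIdx n) - lamStar d v c * c (lastIdx n))) 0

/-- `z* = D⁻¹ (v - λ* c + μ* eₙ)`. -/
def zStar (d v c : Fin (n + 2) → ℝ) : Fin (n + 2) → ℝ := fun i =>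
  (v i - lamStar d v c * c i + muStar d v c * eVec n i) / d i

/-- The primal cost function `f(z) = ½ z^⊤ D z - v^⊤ z`. -/
def f (d v z : Fin (n + 2) → ℝ) : ℝ :=
  (1 / 2) * ∑ i, d i * z i ^ 2 - ∑ i, v i * z i

/-- The Lagrangian `L(z,λ,μ) = f(z) + λ c^⊤ z - μ zₙ`. -/
def L (d v c : Fin (n + 2) → ℝ) (lam mu : ℝ) (z : Fin (n + 2) → ℝ) : ℝ :=
  f d v z + lam * ∑ i, c i * z i - mu * z (lastIdx n)

/-- The triplet `(z*, λ*, μ*)` satisfies the KKT conditions, and `(λ*, μ*)` is a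
Lagrange multiplier for the primal problem: `inf_z L(z,λ*,μ*) = -½ v^⊤ z*`, which is
the optimal value of the primal problem. -/
theorem kkt_and_lagrange_multiplier
    (n : ℕ) (d v c : Fin (n + 2) → ℝ)
    (hd : ∀ i, 0 < d i)
    (hc : ∃ i : Fin (n + 2), i ≠ lastIdx n ∧ c i ≠ 0) :
    (∀ i, d i * zStar d v c i - v i + lamStar d v c * c i - muStar d v c * eVec n i = 0) ∧
    (∑ i, c i * zStar d v c i = 0) ∧
    0 ≤ zStar d v c (lastIdx n) ∧
    0 ≤ muStar d v c ∧
    muStar d v c * zStar d v c (lastIdx n) = 0 ∧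
    sInf (Set.range (L d v c (lamStar d v c) (muStar d v c))) =
      -(1 / 2) * ∑ i, v i * zStar d v c i ∧
    sInf (f d v '' {z | (∑ i, c i * z i = 0) ∧ 0 ≤ z (lastIdx n)}) =
      -(1 / 2) * ∑ i, v i * zStar d v c i := by
  classical
  obtain ⟨i₀, hi₀N, hci₀⟩ := hc
  have hterm : ∀ i : Fin (n + 2), 0 ≤ c i * c i / d i := fun i =>
    div_nonneg (mul_self_nonneg _) (hd i).le
  have hS2 : 0 < cDc d c := by
    rw [cDc]
    exact Finset.sum_pos' (fun i _ => hterm i)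
      ⟨i₀, Finset.mem_univ _, div_pos (mul_self_pos.mpr hci₀) (hd i₀)⟩
  have hsplitc : ∑ i ∈ univ.erase (lastIdx n), c i * c i / d i
      + c (lastIdx n) * c (lastIdx n) / d (lastIdx n) = cDc d c :=
    Finset.sum_erase_add _ _ (Finset.mem_univ _)
  have hT2 : 0 < cDc d c - c (lastIdx n) ^ 2 / d (lastIdx n) := by
    have h : cDc d c - c (lastIdx n) ^ 2 / d (lastIdx n)
        = ∑ i ∈ univ.erase (lastIdx n), c i * c i / d i := by
      rw [← hsplitc]; ring
    rw [h]
    exact Finset.sum_pos' (fun i _ => hterm i)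
      ⟨i₀, Finset.mem_erase.mpr ⟨hi₀N, Finset.mem_univ _⟩,
        div_pos (mul_self_pos.mpr hci₀) (hd i₀)⟩
  -- the key KKT facts, by case split on the indicator
  have key : (∑ i, c i * zStar d v c i = 0) ∧ 0 ≤ zStar d v c (lastIdx n) ∧
      muStar d v c * zStar d v c (lastIdx n) = 0 := by
    by_cases hA : v (lastIdx n) - cDv d v c / cDc d c * c (lastIdx n) < 0
    · -- indicator is 1
      have hind : indA d v c = 1 := if_pos hA
      have hlam : lamStar d v c = (cDv d v c - c (lastIdx n) * v (lastIdx n) / d (lastIdx n))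
          / (cDc d c - c (lastIdx n) ^ 2 / d (lastIdx n)) := by
        rw [lamStar, hind, mul_one, mul_one]
      have hneg : v (lastIdx n) - lamStar d v c * c (lastIdx n) < 0 := by
        rw [hlam]
        have h1 : v (lastIdx n) - (cDv d v c - c (lastIdx n) * v (lastIdx n) / d (lastIdx n))
            / (cDc d c - c (lastIdx n) ^ 2 / d (lastIdx n)) * c (lastIdx n)
            = cDc d c * (v (lastIdx n) - cDv d v c / cDc d c * c (lastIdx n))
              / (cDc d c - c (lastIdx n) ^ 2 / d (lastIdx n)) := by
          field_simp
          ring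
        rw [h1]
        exact div_neg_of_neg_of_pos (mul_neg_of_pos_of_neg hS2 hA) hT2
      have hmu : muStar d v c = lamStar d v c * c (lastIdx n) - v (lastIdx n) := by
        rw [muStar, max_eq_left (by linarith)]; ring
      have hzN : zStar d v c (lastIdx n) = 0 := by
        rw [zStar]
        simp only [eVec, if_pos rfl, hmu]
        rw [div_eq_zero_iff]; left; simp only [if_true]; ring
      have hzsum : ∑ i, c i * zStar d v c i = 0 := by
        rw [← Finset.sum_erase_add _ _ (Finset.mem_univ (lastIdx n)), hzN, mul_zero, add_zero]
        have hterm2 : ∀ i ∈ univ.erase (lastIdx n), c i * zStar d v c i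
            = c i * v i / d i - lamStar d v c * (c i * c i / d i) := by
          intro i hi
          have hiN : i ≠ lastIdx n := (Finset.mem_erase.mp hi).1
          rw [zStar]
          simp only [eVec, if_neg hiN, mul_zero, add_zero]
          have := (hd i).ne'
          field_simp
        rw [Finset.sum_congr rfl hterm2, Finset.sum_sub_distrib, ← Finset.mul_sum]
        have e1 : ∑ i ∈ univ.erase (lastIdx n), c i * v i / d i
            = cDv d v c - c (lastIdx n) * v (lastIdx n) / d (lastIdx n) := by
          rw [cDv, ← Finset.sum_erase_add _ (fun i => c i * v i / d i)
            (Finset.mem_univ (lastIdx n))]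
          ring
        have e2 : ∑ i ∈ univ.erase (lastIdx n), c i * c i / d i
            = cDc d c - c (lastIdx n) ^ 2 / d (lastIdx n) := by
          rw [← hsplitc]; ring
        rw [e1, e2, hlam, div_mul_cancel₀ _ hT2.ne', sub_self]
      exact ⟨hzsum, le_of_eq hzN.symm, by rw [hzN, mul_zero]⟩
    · -- indicator is 0
      have hind : indA d v c = 0 := if_neg hA
      have hlam : lamStar d v c = cDv d v c / cDc d c := by
        rw [lamStar, hind, mul_zero, mul_zero, sub_zero, sub_zero]
      have hge : 0 ≤ v (lastIdx n) - lamStar d v c * c (lastIdx n) := by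
        rw [hlam]; exact not_lt.mp hA
      have hmu : muStar d v c = 0 := by
        rw [muStar]; exact max_eq_right (by linarith)
      have hzN : 0 ≤ zStar d v c (lastIdx n) := by
        rw [zStar]
        apply div_nonneg _ (hd _).le
        simp only [hmu, zero_mul, add_zero]
        exact hge
      have hzsum : ∑ i, c i * zStar d v c i = 0 := by
        have hterm2 : ∀ i ∈ (univ : Finset (Fin (n + 2))), c i * zStar d v c i
            = c i * v i / d i - lamStar d v c * (c i * c i / d i) := by
          intro i _
          rw [zStar, hmu]
          have := (hd i).ne'
          field_simp
          ring
        rw [Finset.sum_congr rfl hterm2, Finset.sum_sub_distrib, ← Finset.mul_sum]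
        have e1 : (∑ i, c i * v i / d i) = cDv d v c := rfl
        have e2 : (∑ i, c i * c i / d i) = cDc d c := rfl
        rw [e1, e2, hlam, div_mul_cancel₀ _ hS2.ne', sub_self]
      exact ⟨hzsum, hzN, by rw [hmu, zero_mul]⟩
  obtain ⟨hcz, hzNnn, hcomp⟩ := key
  have hmu0 : 0 ≤ muStar d v c := le_max_right _ _
  -- stationarity
  have hst : ∀ i, d i * zStar d v c i
      = v i - lamStar d v c * c i + muStar d v c * eVec n i := by
    intro i
    rw [zStar, mul_div_cancel₀ _ (hd i).ne']
  have hstat : ∀ i, d i * zStar d v c i - v i + lamStar d v c * c i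
      - muStar d v c * eVec n i = 0 := by
    intro i; rw [hst i]; ring
  -- sum over the basis vector
  have hez : ∀ z : Fin (n + 2) → ℝ, ∑ i, eVec n i * z i = z (lastIdx n) := by
    intro z
    simp [eVec, ite_mul]
  -- v^T z* = z*^T D z*
  have hsum : ∑ i, d i * zStar d v c i ^ 2 = ∑ i, v i * zStar d v c i := by
    have h1 : ∀ i ∈ (univ : Finset (Fin (n + 2))), d i * zStar d v c i ^ 2
        = v i * zStar d v c i - lamStar d v c * (c i * zStar d v c i)
          + muStar d v c * (eVec n i * zStar d v c i) := by
      intro i _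
      have h2 : d i * zStar d v c i ^ 2 = (d i * zStar d v c i) * zStar d v c i := by ring
      rw [h2, hst i]; ring
    rw [Finset.sum_congr rfl h1, Finset.sum_add_distrib, Finset.sum_sub_distrib,
      ← Finset.mul_sum, ← Finset.mul_sum, hcz, hez, mul_zero, sub_zero, hcomp, add_zero]
  -- the Lagrangian as a sum of decoupled quadratics
  have hL : ∀ z : Fin (n + 2) → ℝ, L d v c (lamStar d v c) (muStar d v c) z
      = ∑ i, ((1 / 2) * (d i * z i ^ 2) - (d i * zStar d v c i) * z i) := by
    intro z
    have e1 : ∑ i, ((1 / 2) * (d i * z i ^ 2) - (d i * zStar d v c i) * z i)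
        = ∑ i, ((1 / 2) * (d i * z i ^ 2) - v i * z i + lamStar d v c * (c i * z i)
            - muStar d v c * (eVec n i * z i)) :=
      Finset.sum_congr rfl (fun i _ => by rw [hst i]; ring)
    rw [e1, L, f, Finset.sum_sub_distrib, Finset.sum_add_distrib, Finset.sum_sub_distrib,
      ← Finset.mul_sum, ← Finset.mul_sum, ← Finset.mul_sum, hez]
  -- lower bound for the Lagrangian
  have hLB : ∀ z, L d v c (lamStar d v c) (muStar d v c) (zStar d v c)
      ≤ L d v c (lamStar d v c) (muStar d v c) z := by
    intro z
    rw [hL z, hL (zStar d v c)]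
    apply Finset.sum_le_sum
    intro i _
    nlinarith [mul_nonneg (hd i).le (sq_nonneg (z i - zStar d v c i))]
  -- value of the Lagrangian at z*
  have hLzs : L d v c (lamStar d v c) (muStar d v c) (zStar d v c)
      = -(1 / 2) * ∑ i, v i * zStar d v c i := by
    rw [hL, show (∑ i, ((1 / 2) * (d i * zStar d v c i ^ 2)
        - (d i * zStar d v c i) * zStar d v c i))
        = -(1 / 2) * ∑ i, d i * zStar d v c i ^ 2 by
      rw [Finset.mul_sum]; exact Finset.sum_congr rfl (fun i _ => by ring), hsum]
  refine ⟨hstat, hcz, hzNnn, hmu0, hcomp, ?_, ?_⟩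
  · rw [← hLzs]
    exact IsLeast.csInf_eq ⟨⟨zStar d v c, rfl⟩, by rintro y ⟨z, rfl⟩; exact hLB z⟩
  · rw [← hLzs]
    have hfz : f d v (zStar d v c) = L d v c (lamStar d v c) (muStar d v c) (zStar d v c) := by
      rw [L, hcz, mul_zero, add_zero, hcomp, sub_zero]
    apply IsLeast.csInf_eq
    constructor
    · exact ⟨zStar d v c, ⟨hcz, hzNnn⟩, hfz⟩
    · rintro y ⟨z, ⟨hz1, hz2⟩, rfl⟩
      have h1 : L d v c (lamStar d v c) (muStar d v c) z ≤ f d v z := by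
        rw [L, hz1, mul_zero, add_zero]
        exact sub_le_self _ (mul_nonneg hmu0 hz2)
      exact (hLB z).trans h1

end Stmt6
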